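/- Let f : ℝⁿ → ℝⁿ be continuously differentiable with λ∞(Df(z)) ≤ Λ for all z ∈ ℝⁿ, let g_i : ℝⁿ → ℝⁿ (i = 1,…,m) be continuous with ‖g_i(z)‖ ≤ K_i for all z, let v_i be measurable with |v_i(t)| ≤ V_i, and let w_i be continuous with |w_i(t)| ≤ r·V_i for some r ≥ 0. Let x be a solution of ẋ = f(x) + Σ_i g_i(x)v_i(t) and y a solution of ẏ = f(y) + Σ_i g_i(y)w_i(t) on [t_k, t_k+h] with y(t_k) = x(t_k). Then for all t ∈ [t_k, t_k+h], ‖x(t) − y(t)‖ ≤ h·(1+r)·K'·φ(Λh), where K' = Σ_{i=1}^m V_i K_i. -/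

import Mathlib

open MeasureTheory Set

/-- `φ(x) = (eˣ − 1)/x` for `x ≠ 0`, `φ(0) = 1`. -/
noncomputable def phi (x : ℝ) : ℝ := if x = 0 then 1 else (Real.exp x - 1) / x

/-- The logarithmic norm `λ∞(A) = max_k ( a_{kk} + Σ_{i≠k} |a_{ki}| )` of a linear map on
`ℝⁿ` with the supremum norm, expressed via its matrix entries `a_{ki} = (A eᵢ)_k`. -/
noncomputable def logNormInf {n : ℕ} (A : (Fin n → ℝ) →L[ℝ] (Fin n → ℝ)) : ℝ :=
  ⨆ k, (A (Pi.single k 1) k + ∑ i ∈ Finset.univ.erase k, |A (Pi.single i 1) k|)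

/-- If `λ∞(Df(z)) ≤ Λ`, `‖gᵢ(z)‖ ≤ Kᵢ`, `|vᵢ(t)| ≤ Vᵢ`, `|wᵢ(t)| ≤ r·Vᵢ`
with `r ≥ 0`, `x` solves `ẋ = f(x) + Σᵢ gᵢ(x)vᵢ(t)` and `y` solves
`ẏ = f(y) + Σᵢ gᵢ(y)wᵢ(t)` on `[t_k, t_k+h]` with `y(t_k) = x(t_k)`, then for all
`t ∈ [t_k, t_k+h]`, `‖x(t) − y(t)‖ ≤ h·(1+r)·K'·φ(Λh)` with `K' = Σᵢ VᵢKᵢ`. -/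
lemma phi_pos (u : ℝ) : 0 < phi u := by
  unfold phi
  split_ifs with h
  · norm_num
  · rcases lt_or_gt_of_ne h with hu | hu
    · have h1 : Real.exp u < 1 := by
        have := Real.exp_lt_exp.mpr hu; rwa [Real.exp_zero] at this
      exact div_pos_of_neg_of_neg (by linarith) hu
    · have h1 : 1 < Real.exp u := by
        have := Real.exp_lt_exp.mpr hu; rwa [Real.exp_zero] at this
      exact div_pos (by linarith) hu

lemma apply_eq_sum {n : ℕ} (A : (Fin n → ℝ) →L[ℝ] (Fin n → ℝ)) (z : Fin n → ℝ) (k : Fin n) :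
    A z k = ∑ i, z i * A (Pi.single i 1) k := by
  have h0 : z = ∑ i, z i • (Pi.single i 1 : Fin n → ℝ) := by
    conv_lhs => rw [← Finset.univ_sum_single z]
    refine Finset.sum_congr rfl fun i _ => ?_
    ext j
    by_cases hji : j = i <;> simp [hji, Pi.single_apply]
  conv_lhs => rw [h0]
  rw [map_sum]
  simp [Finset.sum_apply]

lemma logNormInf_ge {n : ℕ} (A : (Fin n → ℝ) →L[ℝ] (Fin n → ℝ)) (k : Fin n) :
    A (Pi.single k 1) k + ∑ i ∈ Finset.univ.erase k, |A (Pi.single i 1) k| ≤ logNormInf A := by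
  unfold logNormInf
  have hb : BddAbove (Set.range fun k : Fin n =>
      A (Pi.single k 1) k + ∑ i ∈ Finset.univ.erase k, |A (Pi.single i 1) k|) :=
    Set.Finite.bddAbove (Set.finite_range _)
  exact le_ciSup hb k

lemma diag_abs_le_norm {n : ℕ} (A : (Fin n → ℝ) →L[ℝ] (Fin n → ℝ)) (k : Fin n) :
    |A (Pi.single k 1) k| ≤ ‖A‖ := by
  have h1 : |A (Pi.single k 1) k| ≤ ‖A (Pi.single k 1)‖ := by
    rw [← Real.norm_eq_abs]; exact norm_le_pi_norm _ k
  have h2 : ‖A (Pi.single k 1)‖ ≤ ‖A‖ * ‖(Pi.single k 1 : Fin n → ℝ)‖ := A.le_opNorm _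
  have h3 : ‖(Pi.single k 1 : Fin n → ℝ)‖ = 1 := by rw [Pi.norm_single]; norm_num
  rw [h3, mul_one] at h2; linarith

lemma norm_add_smul_le {n : ℕ} (A : (Fin n → ℝ) →L[ℝ] (Fin n → ℝ)) (s : ℝ) (hs : 0 ≤ s)
    (hdiag : ∀ k, 0 ≤ 1 + s * A (Pi.single k 1) k) (z : Fin n → ℝ) :
    ‖z + s • A z‖ ≤ (1 + s * logNormInf A) * ‖z‖ := by
  rcases Nat.eq_zero_or_pos n with hn | hn
  · subst hn
    rw [Subsingleton.elim (z + s • A z) 0, Subsingleton.elim z 0, norm_zero, mul_zero]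
  haveI : Nonempty (Fin n) := Fin.pos_iff_nonempty.mp hn
  have hC : 0 ≤ (1 + s * logNormInf A) * ‖z‖ := by
    obtain ⟨k⟩ := ‹Nonempty (Fin n)›
    have h1 := logNormInf_ge A k
    have h2 : (0:ℝ) ≤ ∑ i ∈ Finset.univ.erase k, |A (Pi.single i 1) k| :=
      Finset.sum_nonneg fun i _ => abs_nonneg _
    have h3 := hdiag k
    have : 0 ≤ 1 + s * logNormInf A := by nlinarith
    exact mul_nonneg this (norm_nonneg z)
  rw [pi_norm_le_iff_of_nonneg hC]
  intro k
  have hzk : ∀ i, |z i| ≤ ‖z‖ := fun i => by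
    rw [← Real.norm_eq_abs]; exact norm_le_pi_norm _ i
  have hsplit : z k + s * A z k
      = (1 + s * A (Pi.single k 1) k) * z k
        + s * ∑ i ∈ Finset.univ.erase k, z i * A (Pi.single i 1) k := by
    rw [apply_eq_sum]
    rw [← Finset.sum_erase_add _ _ (Finset.mem_univ k)]
    ring
  have hT : |∑ i ∈ Finset.univ.erase k, z i * A (Pi.single i 1) k|
      ≤ ‖z‖ * ∑ i ∈ Finset.univ.erase k, |A (Pi.single i 1) k| := by
    calc |∑ i ∈ Finset.univ.erase k, z i * A (Pi.single i 1) k|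
        ≤ ∑ i ∈ Finset.univ.erase k, |z i * A (Pi.single i 1) k| :=
          Finset.abs_sum_le_sum_abs _ _
      _ ≤ ∑ i ∈ Finset.univ.erase k, ‖z‖ * |A (Pi.single i 1) k| := by
          refine Finset.sum_le_sum fun i _ => ?_
          rw [abs_mul]
          exact mul_le_mul_of_nonneg_right (hzk i) (abs_nonneg _)
      _ = ‖z‖ * ∑ i ∈ Finset.univ.erase k, |A (Pi.single i 1) k| := by
          rw [Finset.mul_sum]
  have hln := logNormInf_ge A k
  have hS : (0:ℝ) ≤ ∑ i ∈ Finset.univ.erase k, |A (Pi.single i 1) k| :=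
    Finset.sum_nonneg fun i _ => abs_nonneg _
  have hzn : (0:ℝ) ≤ ‖z‖ := norm_nonneg z
  show |(z + s • A z) k| ≤ (1 + s * logNormInf A) * ‖z‖
  have happ : (z + s • A z) k = z k + s * A z k := rfl
  rw [happ, hsplit]
  have h1 : |(1 + s * A (Pi.single k 1) k) * z k
        + s * ∑ i ∈ Finset.univ.erase k, z i * A (Pi.single i 1) k|
      ≤ (1 + s * A (Pi.single k 1) k) * |z k|
        + s * |∑ i ∈ Finset.univ.erase k, z i * A (Pi.single i 1) k| := by
    calc _ ≤ |(1 + s * A (Pi.single k 1) k) * z k|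
        + |s * ∑ i ∈ Finset.univ.erase k, z i * A (Pi.single i 1) k| := abs_add_le _ _
      _ = _ := by
          rw [abs_mul, abs_mul, abs_of_nonneg (hdiag k), abs_of_nonneg hs]
  have h2 := hzk k
  have hA := mul_le_mul_of_nonneg_left h2 (hdiag k)
  have hB := mul_le_mul_of_nonneg_left hT hs
  have hCc := mul_le_mul_of_nonneg_right (mul_le_mul_of_nonneg_left hln hs) hzn
  nlinarith [hA, hB, hCc, h1]
lemma mean_value_log {n : ℕ} {f : (Fin n → ℝ) → (Fin n → ℝ)} {Λ : ℝ}
    (hf : ContDiff ℝ 1 f) (hΛ : ∀ z, logNormInf (fderiv ℝ f z) ≤ Λ)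
    (a b : Fin n → ℝ) :
    ∃ s₀ > 0, ∀ s : ℝ, 0 ≤ s → s ≤ s₀ →
      ‖(b - a) + s • (f b - f a)‖ ≤ (1 + s * Λ) * ‖b - a‖ := by
  rcases Nat.eq_zero_or_pos n with hn | hn
  · subst hn
    refine ⟨1, one_pos, fun s _ _ => ?_⟩
    rw [Subsingleton.elim ((b - a) + s • (f b - f a)) 0, Subsingleton.elim (b - a) 0,
      norm_zero, mul_zero]
  haveI : Nonempty (Fin n) := Fin.pos_iff_nonempty.mp hn
  have hdc : Continuous fun p => fderiv ℝ f p := hf.continuous_fderiv one_ne_zero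
  have hcpt : IsCompact (segment ℝ a b) := by
    rw [← convexHull_pair]
    exact ((Set.finite_singleton b).insert a).isCompact_convexHull (𝕜 := ℝ)
  obtain ⟨M, hM⟩ := hcpt.exists_bound_of_continuousOn hdc.continuousOn
  set M' : ℝ := max M 0 + 1 with hM'def
  have hM'pos : 0 < M' := by positivity
  refine ⟨1 / M', by positivity, fun s hs0 hs1 => ?_⟩
  have hsM : s * M' ≤ 1 := (le_div_iff₀ hM'pos).mp hs1
  have hbound : ∀ p ∈ segment ℝ a b, ‖fderiv ℝ f p‖ ≤ M' := by
    intro p hp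
    have h1 := hM p hp
    have h2 : M ≤ max M 0 := le_max_left _ _
    simp only [hM'def]; linarith
  have hdiag : ∀ p ∈ segment ℝ a b, ∀ k : Fin n,
      0 ≤ 1 + s * (fderiv ℝ f p) (Pi.single k 1) k := by
    intro p hp k
    have h1 := diag_abs_le_norm (fderiv ℝ f p) k
    have h2 := hbound p hp
    have h3 := neg_abs_le ((fderiv ℝ f p) (Pi.single k 1) k)
    have h4 := abs_nonneg ((fderiv ℝ f p) (Pi.single k 1) k)
    nlinarith
  set G : (Fin n → ℝ) → (Fin n → ℝ) := fun p => p + s • f p with hGdef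
  have hG' : ∀ p, HasFDerivAt G (ContinuousLinearMap.id ℝ (Fin n → ℝ) + s • fderiv ℝ f p) p :=
    fun p => (hasFDerivAt_id p).add (((hf.differentiable one_ne_zero) p).hasFDerivAt.const_smul s)
  have hfd : ∀ p ∈ segment ℝ a b, DifferentiableAt ℝ G p := fun p _ => (hG' p).differentiableAt
  have opbound : ∀ p ∈ segment ℝ a b, ‖fderiv ℝ G p‖ ≤ 1 + s * Λ := by
    intro p hp
    rw [(hG' p).fderiv]
    have hnn : 0 ≤ 1 + s * Λ := by
      obtain ⟨k⟩ := ‹Nonempty (Fin n)›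
      have h1 := logNormInf_ge (fderiv ℝ f p) k
      have h2 := hΛ p
      have h3 : (0:ℝ) ≤ ∑ i ∈ Finset.univ.erase k, |(fderiv ℝ f p) (Pi.single i 1) k| :=
        Finset.sum_nonneg fun i _ => abs_nonneg _
      have h4 := hdiag p hp k
      nlinarith
    refine ContinuousLinearMap.opNorm_le_bound _ hnn fun z => ?_
    have happ : (ContinuousLinearMap.id ℝ (Fin n → ℝ) + s • fderiv ℝ f p) z
        = z + s • (fderiv ℝ f p) z := by
      simp
    rw [happ]
    calc ‖z + s • (fderiv ℝ f p) z‖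
        ≤ (1 + s * logNormInf (fderiv ℝ f p)) * ‖z‖ :=
          norm_add_smul_le _ s hs0 (hdiag p hp) z
      _ ≤ (1 + s * Λ) * ‖z‖ := by
          have := mul_le_mul_of_nonneg_left (hΛ p) hs0
          exact mul_le_mul_of_nonneg_right (by linarith) (norm_nonneg z)
  have key := Convex.norm_image_sub_le_of_norm_fderiv_le hfd opbound
    (convex_segment a b) (left_mem_segment ℝ a b) (right_mem_segment ℝ a b)
  have hGba : G b - G a = (b - a) + s • (f b - f a) := by
    simp only [hGdef, smul_sub]; abel
  rwa [hGba] at key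

lemma gronwallBound_le_phi {Λ ε h s : ℝ} (hε : 0 ≤ ε) (hs : s ≤ h) (hh : 0 < h) :
    gronwallBound 0 Λ ε s ≤ h * ε * phi (Λ * h) := by
  unfold gronwallBound phi
  rcases eq_or_ne Λ 0 with h0 | h0
  · rw [if_pos h0, if_pos (by rw [h0]; ring)]
    nlinarith
  · have hΛh : Λ * h ≠ 0 := mul_ne_zero h0 (ne_of_gt hh)
    rw [if_neg h0, if_neg hΛh, zero_mul, zero_add]
    have hrw : h * ε * ((Real.exp (Λ * h) - 1) / (Λ * h)) = ε / Λ * (Real.exp (Λ * h) - 1) := by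
      field_simp
    rw [hrw]
    rcases lt_or_gt_of_ne h0 with hneg | hpos
    · have hexp : Real.exp (Λ * h) ≤ Real.exp (Λ * s) := Real.exp_le_exp.mpr (by nlinarith)
      have hdiv : ε / Λ ≤ 0 := div_nonpos_of_nonneg_of_nonpos hε (le_of_lt hneg)
      nlinarith
    · have hexp : Real.exp (Λ * s) ≤ Real.exp (Λ * h) := Real.exp_le_exp.mpr (by nlinarith)
      have hdiv : 0 ≤ ε / Λ := div_nonneg hε (le_of_lt hpos)
      nlinarith
theorem solutions_difference_bound {n m : ℕ}
    (f : (Fin n → ℝ) → (Fin n → ℝ)) (g : Fin m → (Fin n → ℝ) → (Fin n → ℝ))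
    (v : Fin m → ℝ → ℝ) (w : Fin m → ℝ → ℝ)
    (K : Fin m → ℝ) (V : Fin m → ℝ) (Λ r : ℝ) (tk h : ℝ)
    (x y : ℝ → Fin n → ℝ)
    (hh : 0 < h) (hr : 0 ≤ r)
    (hf : ContDiff ℝ 1 f)
    (hΛ : ∀ z, logNormInf (fderiv ℝ f z) ≤ Λ)
    (hg : ∀ i, Continuous (g i))
    (hK : ∀ i z, ‖g i z‖ ≤ K i)
    (hv : ∀ i, Measurable (v i))
    (hV : ∀ i, ∀ t ∈ Icc tk (tk + h), |v i t| ≤ V i)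
    (hwc : ∀ i, Continuous (w i))
    (hW : ∀ i, ∀ t ∈ Icc tk (tk + h), |w i t| ≤ r * V i)
    (hxc : ContinuousOn x (Icc tk (tk + h)))
    (hx : ∀ t ∈ Icc tk (tk + h),
      x t = x tk + ∫ s in tk..t, (f (x s) + ∑ i, v i s • g i (x s)))
    (hyc : ContinuousOn y (Icc tk (tk + h)))
    (hy : ∀ t ∈ Icc tk (tk + h),
      y t = y tk + ∫ s in tk..t, (f (y s) + ∑ i, w i s • g i (y s)))
    (hinit : y tk = x tk) :
    ∀ t ∈ Icc tk (tk + h),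
      ‖x t - y t‖ ≤ h * (1 + r) * (∑ i, V i * K i) * phi (Λ * h) := by
  have htk : tk ∈ Icc tk (tk + h) := ⟨le_refl _, by linarith⟩
  have hV0 : ∀ i, 0 ≤ V i := fun i => (abs_nonneg _).trans (hV i tk htk)
  have hK0 : ∀ i, 0 ≤ K i := fun i => (norm_nonneg _).trans (hK i 0)
  have hKp0 : 0 ≤ ∑ i, V i * K i := Finset.sum_nonneg fun i _ => mul_nonneg (hV0 i) (hK0 i)
  set ε : ℝ := (1 + r) * ∑ i, V i * K i with hεdef
  have hε0 : 0 ≤ ε := mul_nonneg (by linarith) hKp0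
  -- integrability of the two integrands
  have key : ∀ (u : Fin m → ℝ → ℝ) (ξ : ℝ → Fin n → ℝ) (C : Fin m → ℝ),
      (∀ i, AEStronglyMeasurable (u i) volume) → ContinuousOn ξ (Icc tk (tk + h)) →
      (∀ i, ∀ τ ∈ Icc tk (tk + h), |u i τ| ≤ C i) →
      IntegrableOn (fun τ => f (ξ τ) + ∑ i, u i τ • g i (ξ τ)) (Icc tk (tk + h)) volume := by
    intro u ξ C hu hξ hC
    apply Integrable.add
    · exact (hf.continuous.comp_continuousOn hξ).integrableOn_compact isCompact_Icc
    · apply integrable_finset_sum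
      intro i _
      have hm : AEStronglyMeasurable (fun τ => u i τ • g i (ξ τ))
          (volume.restrict (Icc tk (tk + h))) :=
        ((hu i).restrict).smul (((hg i).comp_continuousOn hξ).aestronglyMeasurable
          measurableSet_Icc)
      refine ⟨hm, HasFiniteIntegral.restrict_of_bounded (C := C i * K i)
        measure_Icc_lt_top ?_⟩
      rw [ae_restrict_iff' measurableSet_Icc]
      filter_upwards with τ hτ
      rw [norm_smul, Real.norm_eq_abs]
      have hC0 : 0 ≤ C i := (abs_nonneg _).trans (hC i tk htk)
      exact mul_le_mul (hC i τ hτ) (hK i _) (norm_nonneg _) hC0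
  have hFxI : IntegrableOn (fun τ => f (x τ) + ∑ i, v i τ • g i (x τ))
      (Icc tk (tk + h)) volume :=
    key v x V (fun i => (hv i).aestronglyMeasurable) hxc hV
  have hFyI : IntegrableOn (fun τ => f (y τ) + ∑ i, w i τ • g i (y τ))
      (Icc tk (tk + h)) volume :=
    key w y (fun i => r * V i) (fun i => (hwc i).aestronglyMeasurable) hyc hW
  have hsub : ∀ t1 ∈ Icc tk (tk + h), ∀ t2 ∈ Icc tk (tk + h), uIoc t1 t2 ⊆ Icc tk (tk + h) := by
    intro t1 h1 t2 h2 τ hτ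
    exact ⟨(le_min h1.1 h2.1).trans (le_of_lt hτ.1), hτ.2.trans (max_le h1.2 h2.2)⟩
  have hFxInt : ∀ t1 ∈ Icc tk (tk + h), ∀ t2 ∈ Icc tk (tk + h),
      IntervalIntegrable (fun τ => f (x τ) + ∑ i, v i τ • g i (x τ)) volume t1 t2 :=
    fun t1 h1 t2 h2 => intervalIntegrable_iff.mpr (hFxI.mono_set (hsub t1 h1 t2 h2))
  have hFyInt : ∀ t1 ∈ Icc tk (tk + h), ∀ t2 ∈ Icc tk (tk + h),
      IntervalIntegrable (fun τ => f (y τ) + ∑ i, w i τ • g i (y τ)) volume t1 t2 :=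
    fun t1 h1 t2 h2 => intervalIntegrable_iff.mpr (hFyI.mono_set (hsub t1 h1 t2 h2))
  have hdiff : ∀ t1 ∈ Icc tk (tk + h), ∀ t2 ∈ Icc tk (tk + h),
      (x t2 - y t2) - (x t1 - y t1)
        = ∫ τ in t1..t2, ((f (x τ) + ∑ i, v i τ • g i (x τ))
            - (f (y τ) + ∑ i, w i τ • g i (y τ))) := by
    intro t1 h1 t2 h2
    have e1 : x t2 - x t1 = ∫ τ in t1..t2, (f (x τ) + ∑ i, v i τ • g i (x τ)) := by
      rw [hx t2 h2, hx t1 h1, add_sub_add_left_eq_sub]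
      exact intervalIntegral.integral_interval_sub_left (hFxInt tk htk t2 h2)
        (hFxInt tk htk t1 h1)
    have e2 : y t2 - y t1 = ∫ τ in t1..t2, (f (y τ) + ∑ i, w i τ • g i (y τ)) := by
      rw [hy t2 h2, hy t1 h1, add_sub_add_left_eq_sub]
      exact intervalIntegral.integral_interval_sub_left (hFyInt tk htk t2 h2)
        (hFyInt tk htk t1 h1)
    calc (x t2 - y t2) - (x t1 - y t1) = (x t2 - x t1) - (y t2 - y t1) := by abel
      _ = _ := by
          rw [e1, e2]
          exact (intervalIntegral.integral_sub (hFxInt t1 h1 t2 h2)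
            (hFyInt t1 h1 t2 h2)).symm
  -- the liminf-slope hypothesis of Grönwall's inequality
  have hf' : ∀ t ∈ Ico tk (tk + h), ∀ ρ, (fun t => Λ * ‖x t - y t‖ + ε) t < ρ →
      ∃ᶠ t' in nhdsWithin t (Ioi t),
        (t' - t)⁻¹ * (‖x t' - y t'‖ - ‖x t - y t‖) < ρ := by
    intro t ht ρ hρ
    simp only at hρ
    set d := ρ - (Λ * ‖x t - y t‖ + ε) with hddef
    have hd0 : 0 < d := by simp only [hddef]; linarith
    have htI : t ∈ Icc tk (tk + h) := ⟨ht.1, le_of_lt ht.2⟩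
    obtain ⟨s₀, hs₀, hmv⟩ := mean_value_log hf hΛ (y t) (x t)
    have hq : ContinuousOn (fun τ => f (x τ) - f (y τ)) (Icc tk (tk + h)) :=
      (hf.continuous.comp_continuousOn hxc).sub (hf.continuous.comp_continuousOn hyc)
    have hqt := hq t htI
    rw [Metric.continuousWithinAt_iff] at hqt
    obtain ⟨δ₁, hδ₁0, hδ₁⟩ := hqt (d / 2) (by linarith)
    set u := min (t + min s₀ (δ₁ / 2)) (tk + h) with hudef
    have htu : t < u := lt_min (by have := lt_min hs₀ (by linarith : (0:ℝ) < δ₁ / 2); linarith)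
      ht.2
    apply Filter.Eventually.frequently
    filter_upwards [Ioc_mem_nhdsGT_of_mem (⟨le_refl t, htu⟩ : t ∈ Ico t u)] with t' ht'
    have hs0 : 0 < t' - t := by linarith [ht'.1]
    have ht'I : t' ∈ Icc tk (tk + h) :=
      ⟨ht.1.trans (le_of_lt ht'.1), ht'.2.trans (min_le_right _ _)⟩
    have ht'le : t' ≤ t + min s₀ (δ₁ / 2) := ht'.2.trans (min_le_left _ _)
    have hss₀ : t' - t ≤ s₀ := by
      have := min_le_left s₀ (δ₁ / 2); linarith
    -- the integral identity
    have hzz := hdiff t htI t' ht'I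
    have hDint : IntervalIntegrable (fun τ => (f (x τ) + ∑ i, v i τ • g i (x τ))
        - (f (y τ) + ∑ i, w i τ • g i (y τ))) volume t t' :=
      (hFxInt t htI t' ht'I).sub (hFyInt t htI t' ht'I)
    have hsplit : (∫ τ in t..t', ((f (x τ) + ∑ i, v i τ • g i (x τ))
            - (f (y τ) + ∑ i, w i τ • g i (y τ))))
        = (t' - t) • (f (x t) - f (y t))
          + ∫ τ in t..t', ((f (x τ) + ∑ i, v i τ • g i (x τ))
            - (f (y τ) + ∑ i, w i τ • g i (y τ)) - (f (x t) - f (y t))) := by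
      rw [intervalIntegral.integral_sub hDint intervalIntegrable_const,
        intervalIntegral.integral_const]
      abel
    -- bound the error integral
    have hE : ‖∫ τ in t..t', ((f (x τ) + ∑ i, v i τ • g i (x τ))
          - (f (y τ) + ∑ i, w i τ • g i (y τ)) - (f (x t) - f (y t)))‖
        ≤ (ε + d / 2) * (t' - t) := by
      have hb : ∀ τ ∈ uIoc t t', ‖(f (x τ) + ∑ i, v i τ • g i (x τ))
          - (f (y τ) + ∑ i, w i τ • g i (y τ)) - (f (x t) - f (y t))‖ ≤ ε + d / 2 := by
        intro τ hτ
        rw [uIoc_of_le (le_of_lt ht'.1)] at hτ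
        have hτI : τ ∈ Icc tk (tk + h) := ⟨ht.1.trans (le_of_lt hτ.1), hτ.2.trans ht'I.2⟩
        have hdist : dist τ t < δ₁ := by
          rw [Real.dist_eq, abs_of_pos (by linarith [hτ.1] : (0:ℝ) < τ - t)]
          have h1 := hτ.2
          have h2 := min_le_right s₀ (δ₁ / 2)
          linarith
        have hqτ := hδ₁ hτI hdist
        rw [dist_eq_norm] at hqτ
        have hrw : (f (x τ) + ∑ i, v i τ • g i (x τ))
              - (f (y τ) + ∑ i, w i τ • g i (y τ)) - (f (x t) - f (y t))
            = ((f (x τ) - f (y τ)) - (f (x t) - f (y t)))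
              + ∑ i, (v i τ • g i (x τ) - w i τ • g i (y τ)) := by
          rw [Finset.sum_sub_distrib]
          abel
        rw [hrw]
        have hpert : ‖∑ i, (v i τ • g i (x τ) - w i τ • g i (y τ))‖ ≤ ε := by
          calc ‖∑ i, (v i τ • g i (x τ) - w i τ • g i (y τ))‖
              ≤ ∑ i, ‖v i τ • g i (x τ) - w i τ • g i (y τ)‖ := norm_sum_le _ _
            _ ≤ ∑ i, (1 + r) * (V i * K i) := by
                refine Finset.sum_le_sum fun i _ => ?_
                calc ‖v i τ • g i (x τ) - w i τ • g i (y τ)‖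
                    ≤ ‖v i τ • g i (x τ)‖ + ‖w i τ • g i (y τ)‖ := norm_sub_le _ _
                  _ = |v i τ| * ‖g i (x τ)‖ + |w i τ| * ‖g i (y τ)‖ := by
                      rw [norm_smul, norm_smul, Real.norm_eq_abs, Real.norm_eq_abs]
                  _ ≤ V i * K i + (r * V i) * K i := add_le_add
                      (mul_le_mul (hV i τ hτI) (hK i _) (norm_nonneg _) (hV0 i))
                      (mul_le_mul (hW i τ hτI) (hK i _) (norm_nonneg _)
                        (mul_nonneg hr (hV0 i)))
                  _ = (1 + r) * (V i * K i) := by ring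
            _ = ε := by rw [hεdef, Finset.mul_sum]
        calc ‖((f (x τ) - f (y τ)) - (f (x t) - f (y t)))
              + ∑ i, (v i τ • g i (x τ) - w i τ • g i (y τ))‖
            ≤ ‖(f (x τ) - f (y τ)) - (f (x t) - f (y t))‖
              + ‖∑ i, (v i τ • g i (x τ) - w i τ • g i (y τ))‖ := norm_add_le _ _
          _ ≤ ε + d / 2 := by
              have := le_of_lt hqτ
              linarith
      have := intervalIntegral.norm_integral_le_of_norm_le_const hb
      rwa [abs_of_pos hs0] at this
    -- combine
    have hmvs := hmv (t' - t) (le_of_lt hs0) hss₀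
    have hz' : x t' - y t' = ((x t - y t) + (t' - t) • (f (x t) - f (y t)))
        + ∫ τ in t..t', ((f (x τ) + ∑ i, v i τ • g i (x τ))
            - (f (y τ) + ∑ i, w i τ • g i (y τ)) - (f (x t) - f (y t))) := by
      have h1 := eq_add_of_sub_eq hzz
      rw [h1, hsplit]
      abel
    have hnorm : ‖x t' - y t'‖ ≤ (1 + (t' - t) * Λ) * ‖x t - y t‖
        + (ε + d / 2) * (t' - t) := by
      rw [hz']
      calc ‖((x t - y t) + (t' - t) • (f (x t) - f (y t)))
            + ∫ τ in t..t', ((f (x τ) + ∑ i, v i τ • g i (x τ))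
              - (f (y τ) + ∑ i, w i τ • g i (y τ)) - (f (x t) - f (y t)))‖
          ≤ ‖(x t - y t) + (t' - t) • (f (x t) - f (y t))‖
            + ‖∫ τ in t..t', ((f (x τ) + ∑ i, v i τ • g i (x τ))
              - (f (y τ) + ∑ i, w i τ • g i (y τ)) - (f (x t) - f (y t)))‖ := norm_add_le _ _
        _ ≤ _ := add_le_add hmvs hE
    rw [inv_mul_lt_iff₀ hs0]
    have hρ : ρ = Λ * ‖x t - y t‖ + ε + d := by rw [hddef]; ring
    nlinarith [hnorm, hs0, hd0]
  -- apply Grönwall's inequality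
  intro t ht
  have main := le_gronwallBound_of_liminf_deriv_right_le (f := fun τ => ‖x τ - y τ‖)
    (f' := fun τ => Λ * ‖x τ - y τ‖ + ε) (δ := 0) (K := Λ) (ε := ε) (a := tk) (b := tk + h)
    ((hxc.sub hyc).norm) hf'
    (by show ‖x tk - y tk‖ ≤ 0; rw [hinit, sub_self, norm_zero]) (fun τ _ => le_rfl) t ht
  calc ‖x t - y t‖ ≤ gronwallBound 0 Λ ε (t - tk) := main
    _ ≤ h * ε * phi (Λ * h) := gronwallBound_le_phi hε0 (by linarith [ht.2]) hh
    _ = h * (1 + r) * (∑ i, V i * K i) * phi (Λ * h) := by rw [hεdef]; ring
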